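/- Let α be a nonnegative random variable with continuous distribution function F, values in [0,H) (0 < H ≤ ∞), survival function F̄ = 1 - F positive on [0,H), and finite mean Eα > c ≥ 0. If α is DMRD (its mean residual demand function m is nonincreasing on [0,H)), then the function x ↦ P(x) - c, where P(x) := E[(α - x)_+], is log-concave on the set {x ∈ [0,H) : P(x) > c}; equivalently, x ↦ log(P(x) - c) is concave there. -/

import Mathlib

open MeasureTheory Set Filter Function

noncomputable section

/-- The mean residual demand (MRD) function `m(x) = (1/F̄(x)) ∫_x^H F̄(u) du`
(the survival function vanishes beyond `H`, so the integral may be taken over `(x,∞)`). -/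
def mrd (F : ℝ → ℝ) (x : ℝ) : ℝ :=
  (∫ u in Ioi x, (1 - F u)) / (1 - F x)

/-- The expected price `P(x) = E[(α - x)₊]` at total output `x`. -/
def Pfun {Ω : Type*} [MeasurableSpace Ω] (μ : Measure Ω) (α : Ω → ℝ) (x : ℝ) : ℝ :=
  ∫ ω, max (α ω - x) 0 ∂μ

/-- If `α` is DMRD, then `x ↦ P(x) - c` is log-concave on `{x ∈ [0,H) : P(x) > c}`,
i.e., `x ↦ log (P(x) - c)` is concave there. -/
theorem stmt7 {Ω : Type*} [MeasurableSpace Ω] (μ : Measure Ω) [IsProbabilityMeasure μ]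
    (α : Ω → ℝ) (hαmeas : Measurable α)
    (H : EReal) (hH : 0 < H)
    (hval : ∀ᵐ ω ∂μ, 0 ≤ α ω ∧ (α ω : EReal) < H)
    (hαint : Integrable α μ)
    (F : ℝ → ℝ)
    (hF : ∀ x : ℝ, F x = (μ {ω | α ω ≤ x}).toReal)
    (hFcont : Continuous F)
    (hFbar : ∀ x : ℝ, 0 ≤ x → (x : EReal) < H → 0 < 1 - F x)
    (c : ℝ) (hc : 0 ≤ c) (hcE : c < ∫ ω, α ω ∂μ)
    (hDMRD : ∀ x y : ℝ, 0 ≤ x → x ≤ y → (y : EReal) < H → mrd F y ≤ mrd F x) :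
    ConcaveOn ℝ {x : ℝ | 0 ≤ x ∧ (x : EReal) < H ∧ c < Pfun μ α x}
      (fun x => Real.log (Pfun μ α x - c)) := by
  classical
  set G : ℝ → ℝ := fun u => (μ {ω | u < α ω}).toReal with hGdef
  set P : ℝ → ℝ := Pfun μ α with hPdef
  set S : Set ℝ := {x : ℝ | 0 ≤ x ∧ (x : EReal) < H ∧ c < P x} with hSdef
  -- G = 1 - F
  have hGbar : ∀ u, G u = 1 - F u := by
    intro u
    have hs : MeasurableSet {ω | α ω ≤ u} := hαmeas measurableSet_Iic
    have hcompl : {ω | u < α ω} = {ω | α ω ≤ u}ᶜ := by ext ω; simp [not_le]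
    show (μ {ω | u < α ω}).toReal = 1 - F u
    rw [hcompl, measure_compl hs (measure_ne_top μ _), measure_univ,
      ENNReal.toReal_sub_of_le prob_le_one ENNReal.one_ne_top, ENNReal.toReal_one, hF u]
  have hGcont : Continuous G := by
    have : G = fun u => 1 - F u := funext hGbar
    rw [this]; exact continuous_const.sub hFcont
  have hFmono : Monotone F := by
    intro a b hab
    rw [hF a, hF b]
    exact ENNReal.toReal_mono (measure_ne_top μ _)
      (measure_mono fun ω h => le_trans h hab)
  have hGanti : Antitone G := fun a b hab => by
    rw [hGbar a, hGbar b]; have := hFmono hab; linarith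
  -- integrability of the positive part
  have hint : ∀ x : ℝ, Integrable (fun ω => max (α ω - x) 0) μ :=
    fun x => (hαint.sub (integrable_const x)).pos_part
  -- layer cake: P x = ∫_{Ioi x} G
  have key : ∀ x : ℝ, P x = ∫ u in Ioi x, G u := by
    intro x
    have hnn : 0 ≤ᵐ[μ] fun ω => max (α ω - x) 0 :=
      Eventually.of_forall fun ω => le_max_right _ _
    have h1 := (hint x).integral_eq_integral_meas_lt hnn
    show Pfun μ α x = _
    rw [Pfun, h1]
    have h2 : ∀ t ∈ Ioi (0:ℝ), (μ {a | t < max (α a - x) 0}).toReal = G (x + t) := by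
      intro t ht
      have ht0 : (0:ℝ) < t := ht
      congr 2
      ext ω
      simp only [mem_setOf_eq, lt_max_iff]
      constructor
      · rintro (h | h)
        · linarith
        · linarith
      · intro h; left; linarith
    show ∫ t in Ioi (0:ℝ), (μ {a | t < max (α a - x) 0}).toReal = _
    rw [setIntegral_congr_fun measurableSet_Ioi h2]
    have h3 : ∀ t : ℝ, (Ioi (0:ℝ)).indicator (fun t => G (x + t)) t
        = (Ioi x).indicator G (x + t) := by
      intro t
      by_cases ht : t ∈ Ioi (0:ℝ)
      · rw [indicator_of_mem ht, indicator_of_mem (by simp only [mem_Ioi] at ht ⊢; linarith)]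
      · rw [indicator_of_notMem ht,
          indicator_of_notMem (by simp only [mem_Ioi] at ht ⊢; linarith)]
    calc ∫ t in Ioi (0:ℝ), G (x + t)
        = ∫ t, (Ioi (0:ℝ)).indicator (fun t => G (x + t)) t :=
          (integral_indicator measurableSet_Ioi).symm
      _ = ∫ t, (Ioi x).indicator G (x + t) := by simp_rw [h3]
      _ = ∫ u, (Ioi x).indicator G u := integral_add_left_eq_self _ x
      _ = ∫ u in Ioi x, G u := integral_indicator measurableSet_Ioi
  -- integrability of G on Ioi 0
  have hGint : IntegrableOn G (Ioi (0:ℝ)) := by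
    have hmax : Integrable (fun ω => max (α ω) 0) μ := hαint.pos_part
    have hnn : 0 ≤ᵐ[μ] fun ω => max (α ω) 0 := Eventually.of_forall fun ω => le_max_right _ _
    have hlint := lintegral_eq_lintegral_meas_lt μ hnn hmax.aemeasurable
    have hfin : (∫⁻ t in Ioi (0:ℝ), μ {a | t < max (α a) 0}) < ⊤ := by
      rw [← hlint]
      exact hmax.lintegral_lt_top
    have hset : ∀ t ∈ Ioi (0:ℝ), {a | t < max (α a) 0} = {ω | t < α ω} := by
      intro t ht
      have ht0 : (0:ℝ) < t := ht
      ext ω; simp only [mem_setOf_eq, lt_max_iff]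
      constructor
      · rintro (h | h)
        · exact h
        · exact absurd h (by linarith)
      · intro h; left; exact h
    have hfin2 : (∫⁻ t in Ioi (0:ℝ), μ {ω | t < α ω}) < ⊤ := by
      refine lt_of_eq_of_lt ?_ hfin
      exact (setLIntegral_congr_fun measurableSet_Ioi
        (fun t ht => by rw [hset t ht])).symm
    refine ⟨hGcont.aestronglyMeasurable.restrict, ?_⟩
    rw [hasFiniteIntegral_iff_norm]
    calc (∫⁻ t in Ioi (0:ℝ), ENNReal.ofReal ‖G t‖)
        ≤ ∫⁻ t in Ioi (0:ℝ), μ {ω | t < α ω} := by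
          apply lintegral_mono
          intro t
          simp only []
          rw [Real.norm_of_nonneg ENNReal.toReal_nonneg]
          exact ENNReal.ofReal_toReal_le
      _ < ⊤ := hfin2
  -- mrd in terms of P and G
  have hmrdP : ∀ x : ℝ, mrd F x = P x / G x := by
    intro x
    rw [mrd, key x, hGbar x]
    congr 1
    exact setIntegral_congr_fun measurableSet_Ioi fun u _ => (hGbar u).symm
  -- P is 1-Lipschitz, hence continuous
  have hPlip : ∀ x y : ℝ, |P x - P y| ≤ |x - y| := by
    intro x y
    have hsub : P x - P y = ∫ ω, (max (α ω - x) 0 - max (α ω - y) 0) ∂μ :=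
      (integral_sub (hint x) (hint y)).symm
    rw [hsub]
    calc |∫ ω, (max (α ω - x) 0 - max (α ω - y) 0) ∂μ|
        ≤ ∫ ω, |max (α ω - x) 0 - max (α ω - y) 0| ∂μ := by
          simpa [Real.norm_eq_abs] using
            norm_integral_le_integral_norm (fun ω => max (α ω - x) 0 - max (α ω - y) 0) (μ := μ)
      _ ≤ ∫ _ : Ω, |x - y| ∂μ := by
          apply integral_mono ((hint x).sub (hint y)).abs (integrable_const _)
          intro ω
          calc |max (α ω - x) 0 - max (α ω - y) 0| ≤ |(α ω - x) - (α ω - y)| :=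
                abs_max_sub_max_le_abs _ _ _
            _ = |x - y| := by rw [abs_sub_comm]; ring_nf
      _ = |x - y| := by simp
  have hPcont : Continuous P := by
    have hl : LipschitzWith 1 P := LipschitzWith.of_dist_le_mul fun x y => by
      rw [Real.dist_eq, Real.dist_eq]
      simpa using hPlip x y
    exact hl.continuous
  -- P antitone
  have hPanti : Antitone P := by
    intro a b hab
    apply integral_mono (hint b) (hint a)
    intro ω
    exact max_le_max (by linarith) le_rfl
  -- S is convex
  have hSconv : Convex ℝ S := by
    apply Set.OrdConnected.convex
    constructor
    intro x hx z hz y hy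
    exact ⟨le_trans hx.1 hy.1,
      lt_of_le_of_lt (EReal.coe_le_coe_iff.mpr hy.2) hz.2.1,
      lt_of_lt_of_le hz.2.2 (hPanti hy.2)⟩
  -- interior points are positive and in S
  have hIntS : ∀ y ∈ interior S, 0 < y ∧ y ∈ S := by
    intro y hy
    refine ⟨?_, interior_subset hy⟩
    have h1 : interior S ⊆ interior (Ici (0:ℝ)) :=
      interior_mono fun x hx => hx.1
    have := h1 hy
    rwa [interior_Ici] at this
  -- representation of P for nonneg arguments
  have key2 : ∀ z : ℝ, 0 ≤ z → P z = P 0 - ∫ t in (0:ℝ)..z, G t := by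
    intro z hz
    have hunion : Ioc (0:ℝ) z ∪ Ioi z = Ioi 0 := Ioc_union_Ioi_eq_Ioi hz
    have hdisj : Disjoint (Ioc (0:ℝ) z) (Ioi z) := by
      rw [Set.disjoint_left]
      intro t ht ht'
      exact absurd ht.2 (not_le.mpr ht')
    have hsplit : (∫ t in Ioi (0:ℝ), G t)
        = (∫ t in Ioc (0:ℝ) z, G t) + ∫ t in Ioi z, G t := by
      rw [← setIntegral_union hdisj measurableSet_Ioi
        (hGint.mono_set Ioc_subset_Ioi_self) (hGint.mono_set (Ioi_subset_Ioi hz)), hunion]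
    rw [intervalIntegral.integral_of_le hz, key z, key 0]
    linarith [hsplit]
  -- derivative of log (P - c) at interior points
  have hlogderiv : ∀ y ∈ interior S,
      HasDerivAt (fun z => Real.log (P z - c)) (-(G y) / (P y - c)) y := by
    intro y hy
    obtain ⟨hy0, hyS⟩ := hIntS y hy
    have hii : IntervalIntegrable G volume 0 y := hGcont.intervalIntegrable 0 y
    have hd1 : HasDerivAt (fun z => ∫ t in (0:ℝ)..z, G t) (G y) y :=
      intervalIntegral.integral_hasDerivAt_right hii
        hGcont.stronglyMeasurable.stronglyMeasurableAtFilter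
        hGcont.continuousAt
    have hd2 : HasDerivAt (fun z => P 0 - ∫ t in (0:ℝ)..z, G t) (-(G y)) y :=
      hd1.const_sub (P 0)
    have heq : (fun z => P 0 - ∫ t in (0:ℝ)..z, G t) =ᶠ[nhds y] P := by
      filter_upwards [Ioi_mem_nhds hy0] with z hz
      exact (key2 z (le_of_lt hz)).symm
    have hdP : HasDerivAt P (-(G y)) y := hd2.congr_of_eventuallyEq heq.symm
    have hpos : 0 < P y - c := sub_pos.mpr hyS.2.2
    have := (hdP.sub_const c).log (ne_of_gt hpos)
    simpa using this
  -- continuity of log (P - c) on S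
  have hlogcont : ContinuousOn (fun x => Real.log (P x - c)) S := by
    apply ContinuousOn.log
    · exact (hPcont.continuousOn.sub continuousOn_const)
    · intro x hx
      exact ne_of_gt (sub_pos.mpr hx.2.2)
  -- positivity of G on S
  have hGpos : ∀ x ∈ S, 0 < G x := by
    intro x hx
    rw [hGbar x]
    exact hFbar x hx.1 hx.2.1
  -- apply the concavity criterion
  apply AntitoneOn.concaveOn_of_deriv hSconv hlogcont
  · intro y hy
    exact ((hlogderiv y hy).differentiableAt).differentiableWithinAt
  · intro a ha b hb hab
    rw [(hlogderiv a ha).deriv, (hlogderiv b hb).deriv]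
    obtain ⟨ha0, haS⟩ := hIntS a ha
    obtain ⟨hb0, hbS⟩ := hIntS b hb
    have hGa : 0 < G a := hGpos a haS
    have hGb : 0 < G b := hGpos b hbS
    have hPa : 0 < P a - c := sub_pos.mpr haS.2.2
    have hPb : 0 < P b - c := sub_pos.mpr hbS.2.2
    have hmrd : mrd F b ≤ mrd F a := hDMRD a b haS.1 hab hbS.2.1
    rw [hmrdP a, hmrdP b, div_le_div_iff₀ hGb hGa] at hmrd
    have hGba : G b ≤ G a := hGanti hab
    have hcG : c * G b ≤ c * G a := mul_le_mul_of_nonneg_left hGba hc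
    rw [div_le_div_iff₀ hPb hPa]
    nlinarith
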